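/- Let M be a transitive permutation group of degree 6 containing a regular dihedral subgroup of order 6, and suppose the order of a Sylow 3-subgroup of M is 3. Then all regular dihedral subgroups of order 6 of M are conjugate in M. -/

import Mathlib

open Equiv Pointwise

private lemma perm_cases {p t : Equiv.Perm (Fin 6)}
    (hp3 : ∀ x, p (p (p x)) = x) (hpf : ∀ x, p x ≠ x)
    (htf : ∀ x, t x ≠ x) (htp : ∀ x, t (p x) = p (p (t x)))
    (y x : Fin 6) :
    x = y ∨ x = p y ∨ x = p (p y) ∨ x = t y ∨ x = p (t y) ∨ x = p (p (t y)) := by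
  have hinj := p.injective
  have hpp : ∀ z, p (p z) ≠ z := by
    intro z h
    have h2 := congrArg p h
    rw [hp3] at h2
    exact hpf z h2.symm
  have hty : t y ≠ p y := by
    intro h
    apply htf (p (p y))
    rw [htp, htp, h]
    exact hp3 _
  have hty2 : t y ≠ p (p y) := by
    intro h
    apply htf (p y)
    rw [htp, h]
    exact hp3 _
  have n01 : y ≠ p y := fun h => hpf y h.symm
  have n02 : y ≠ p (p y) := fun h => hpp y h.symm
  have n12 : p y ≠ p (p y) := fun h => hpf (p y) h.symm
  have n03 : y ≠ t y := fun h => htf y h.symm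
  have n13 : p y ≠ t y := fun h => hty h.symm
  have n23 : p (p y) ≠ t y := fun h => hty2 h.symm
  have n04 : y ≠ p (t y) := by
    intro h
    apply hty2
    have h2 := congrArg p (congrArg p h)
    rw [hp3] at h2
    exact h2.symm
  have n14 : p y ≠ p (t y) := fun h => n03 (hinj h)
  have n24 : p (p y) ≠ p (t y) := fun h => n13 (hinj h)
  have n05 : y ≠ p (p (t y)) := by
    intro h
    apply n13
    have h2 := congrArg p h
    rw [hp3] at h2
    exact h2
  have n15 : p y ≠ p (p (t y)) := fun h => n04 (hinj h)
  have n25 : p (p y) ≠ p (p (t y)) := fun h => n03 (hinj (hinj h))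
  have n34 : t y ≠ p (t y) := fun h => hpf (t y) h.symm
  have n35 : t y ≠ p (p (t y)) := fun h => hpp (t y) h.symm
  have n45 : p (t y) ≠ p (p (t y)) := fun h => hpf (t y) (hinj h).symm
  have hcard : ({y, p y, p (p y), t y, p (t y), p (p (t y))} : Finset (Fin 6)).card = 6 := by
    rw [Finset.card_insert_of_notMem (by simp [n01, n02, n03, n04, n05]),
        Finset.card_insert_of_notMem (by simp [n12, n13, n14, n15]),
        Finset.card_insert_of_notMem (by simp [n23, n24, n25]),
        Finset.card_insert_of_notMem (by simp [n34, n35]),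
        Finset.card_insert_of_notMem (by simp [n45]),
        Finset.card_singleton]
  have huniv : ({y, p y, p (p y), t y, p (t y), p (p (t y))} : Finset (Fin 6)) = Finset.univ :=
    Finset.eq_univ_of_card _ (by simp [hcard])
  have hx : x ∈ ({y, p y, p (p y), t y, p (t y), p (p (t y))} : Finset (Fin 6)) :=
    huniv ▸ Finset.mem_univ x
  simpa using hx

private lemma invol_eq {p s t : Equiv.Perm (Fin 6)}
    (hp3 : ∀ x, p (p (p x)) = x) (hpf : ∀ x, p x ≠ x)
    (hss : ∀ x, s (s x) = x)
    (htt : ∀ x, t (t x) = x) (htf : ∀ x, t x ≠ x)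
    (hsp : ∀ x, s (p x) = p (p (s x)))
    (htp : ∀ x, t (p x) = p (p (t x)))
    (hst : s 0 = t 0) : s = t := by
  apply Equiv.ext
  intro x
  rcases perm_cases hp3 hpf htf htp 0 x with h | h | h | h | h | h <;> subst h
  · exact hst
  · rw [hsp, htp, hst]
  · rw [hsp, hsp, htp, htp, hst]
  · rw [htt, ← hst, hss]
  · rw [hsp, htp, htt, ← hst, hss]
  · rw [hsp, hsp, htp, htp, htt, ← hst, hss]

private lemma cube_eq {G : Type*} [Group G] {p : G} (h : orderOf p = 3) : p * (p * p) = 1 := by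
  have h2 := pow_orderOf_eq_one p
  rw [h, show (3 : ℕ) = 2 + 1 by norm_num, pow_succ, pow_two, mul_assoc] at h2
  exact h2

private lemma conj_rel {G : Type*} [Group G] {p t : G} (hp : p * (p * p) = 1) (ht : t * t = 1)
    (htp : t * p * t = p⁻¹) :
    (p * t) * (p * t) = 1 ∧ (p * t) * p * (p * t) = p⁻¹ ∧
    (p * p * t) * (p * p * t) = 1 ∧ (p * p * t) * p * (p * p * t) = p⁻¹ := by
  have h1 : t * p = p⁻¹ * t := by
    have h2 := congrArg (· * t) htp
    simpa [mul_assoc, ht] using h2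
  have key : ∀ x : G, t * (p * x) = p⁻¹ * (t * x) := by
    intro x
    rw [← mul_assoc, h1, mul_assoc]
  refine ⟨?_, ?_, ?_, ?_⟩ <;> simp [mul_assoc, key, ht]

private lemma zpowers_cases {G : Type*} [Group G] {a b : G} (ha : orderOf a = 3)
    (h : b ∈ Subgroup.zpowers a) : b = 1 ∨ b = a ∨ b = a * a := by
  obtain ⟨n, rfl⟩ := Subgroup.mem_zpowers_iff.mp h
  have h2 : a ^ (n % (3 : ℤ)) = a ^ n := by
    have h3 := zpow_mod_orderOf a n
    rw [ha] at h3
    norm_num at h3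
    exact h3
  have h3 : n % 3 = 0 ∨ n % 3 = 1 ∨ n % 3 = 2 := by omega
  rcases h3 with h3 | h3 | h3 <;> rw [← h2, h3]
  · left; simp
  · right; left; simp
  · right; right; exact zpow_two a

private lemma invol_ne_one {G : Type*} [Group G] {u p : G} (hup : u * p * u = p⁻¹)
    (hp31 : p * (p * p) = 1) (hpne : p ≠ 1) : u ≠ 1 := by
  intro h
  rw [h, one_mul, mul_one] at hup
  apply hpne
  have h2 : p * p = 1 := eq_inv_iff_mul_eq_one.mp hup
  have h3 := hp31
  rw [h2, mul_one] at h3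
  exact h3

private lemma pointwise_facts {u p : Equiv.Perm (Fin 6)} (hu2 : u * u = 1)
    (hup : u * p * u = p⁻¹) (hp31 : p * (p * p) = 1) :
    (∀ x, u (u x) = x) ∧ (∀ x, u (p x) = p (p (u x))) := by
  have hpinv : p⁻¹ = p * p := inv_eq_of_mul_eq_one_right hp31
  constructor
  · intro x
    have h := Equiv.ext_iff.mp hu2 x
    simpa [Equiv.Perm.mul_apply] using h
  · intro x
    have h1 : u * p = p * (p * u) := by
      have h2 := congrArg (· * u) hup
      simpa [mul_assoc, hu2, hpinv] using h2
    have h3 := Equiv.ext_iff.mp h1 x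
    simpa [Equiv.Perm.mul_apply] using h3

private lemma exists_invol (p : Equiv.Perm (Fin 6)) (E : Subgroup (Equiv.Perm (Fin 6)))
    (hpE : p ∈ E) (hp : orderOf p = 3) (hcE : Nat.card E = 6)
    (hEc : ¬ ∀ x y : E, x * y = y * x) :
    ∃ s, s ∈ E ∧ s * s = 1 ∧ s ≠ 1 ∧ s * p * s = p⁻¹ := by
  haveI : Fact (Nat.Prime 2) := ⟨Nat.prime_two⟩
  obtain ⟨s', hs'⟩ := exists_prime_orderOf_dvd_card' (G := E) 2 (by rw [hcE]; norm_num)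
  set p' : E := ⟨p, hpE⟩ with hp'def
  have hop' : orderOf p' = 3 := by rw [Subgroup.orderOf_mk]; exact hp
  have hcard : Nat.card (Subgroup.zpowers p') = 3 := by rw [Nat.card_zpowers, hop']
  have hidx : (Subgroup.zpowers p').index = 2 := by
    have h := Subgroup.index_mul_card (Subgroup.zpowers p')
    rw [hcard, hcE] at h
    omega
  have hs'n : s' ∉ Subgroup.zpowers p' := by
    intro hmem
    have h := Subgroup.orderOf_dvd_natCard _ hmem
    rw [hcard, hs'] at h
    norm_num at h
  have hps : p' * s'⁻¹ ∉ Subgroup.zpowers p' := by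
    intro h
    have h2 := (mul_mem_cancel_left (Subgroup.mem_zpowers p')).mp h
    exact hs'n (by simpa using h2)
  have hu : s' * (p' * s'⁻¹) ∈ Subgroup.zpowers p' := by
    rw [Subgroup.mul_mem_iff_of_index_two hidx]
    exact iff_of_false hs'n hps
  have hu' : s' * p' * s'⁻¹ ∈ Subgroup.zpowers p' := by rwa [mul_assoc]
  have hou : orderOf (s' * p' * s'⁻¹) = 3 := by
    have h : s' * p' * s'⁻¹ = (MulAut.conj s').toMonoidHom p' := rfl
    rw [h, orderOf_injective _ (MulAut.conj s').injective, hop']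
  have hs2 : s' * s' = 1 := by
    have h := pow_orderOf_eq_one s'
    rw [hs', sq] at h
    exact h
  rcases zpowers_cases hop' hu' with h1 | h1 | h1
  · rw [h1] at hou; simp at hou
  · exfalso
    have hcomm : Commute p' s' := by
      have h2 := congrArg (· * s') h1
      simp only [inv_mul_cancel_right] at h2
      exact (h2.symm : p' * s' = s' * p')
    have h6 : orderOf (p' * s') = 6 := by
      rw [hcomm.orderOf_mul_eq_mul_orderOf_of_coprime (by rw [hop', hs']; norm_num), hop', hs']
    have htop : Subgroup.zpowers (p' * s') = ⊤ := by
      apply Subgroup.eq_top_of_card_eq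
      rw [Nat.card_zpowers, h6, hcE]
    apply hEc
    intro x y
    obtain ⟨m, hm⟩ := Subgroup.mem_zpowers_iff.mp (htop ▸ Subgroup.mem_top x)
    obtain ⟨k, hk⟩ := Subgroup.mem_zpowers_iff.mp (htop ▸ Subgroup.mem_top y)
    rw [← hm, ← hk, ← zpow_add, ← zpow_add, add_comm]
  · refine ⟨(s' : Equiv.Perm (Fin 6)), s'.2, ?_, ?_, ?_⟩
    · have h := congrArg (fun z : E => (z : Equiv.Perm (Fin 6))) hs2
      simpa using h
    · intro h
      have h2 : s' = 1 := by
        apply Subtype.ext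
        simpa using h
      rw [h2] at hs'
      simp at hs'
    · have hp31 : p * (p * p) = 1 := cube_eq hp
      have hpinv : p⁻¹ = p * p := inv_eq_of_mul_eq_one_right hp31
      have hs'inv : s'⁻¹ = s' := inv_eq_of_mul_eq_one_right hs2
      rw [hs'inv] at h1
      have h := congrArg (fun z : E => (z : Equiv.Perm (Fin 6))) h1
      simp only [Subgroup.coe_mul] at h
      rw [hpinv]
      exact h

private lemma subgroup_eq {p : Equiv.Perm (Fin 6)} {D E : Subgroup (Equiv.Perm (Fin 6))}
    (hpD : p ∈ D) (hpE : p ∈ E) (hp : orderOf p = 3)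
    (hcD : Nat.card D = 6) (hcE : Nat.card E = 6)
    (hDf : ∀ g ∈ D, ∀ x : Fin 6, g x = x → g = 1)
    (hEf : ∀ g ∈ E, ∀ x : Fin 6, g x = x → g = 1)
    (hDc : ¬ ∀ x y : D, x * y = y * x)
    (hEc : ¬ ∀ x y : E, x * y = y * x) : D = E := by
  obtain ⟨t, htD, ht2, ht1, htp⟩ := exists_invol p D hpD hp hcD hDc
  obtain ⟨s, hsE, hs2, hs1, hsp⟩ := exists_invol p E hpE hp hcE hEc
  have hp31 : p * (p * p) = 1 := cube_eq hp
  have hp3 : ∀ x, p (p (p x)) = x := by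
    intro x
    have h := Equiv.ext_iff.mp hp31 x
    simpa [Equiv.Perm.mul_apply] using h
  have hpne : p ≠ 1 := by intro h; rw [h] at hp; simp at hp
  have hpf : ∀ x, p x ≠ x := fun x hx => hpne (hEf p hpE x hx)
  have hsf : ∀ x, s x ≠ x := fun x hx => hs1 (hEf s hsE x hx)
  have htf : ∀ x, t x ≠ x := fun x hx => ht1 (hDf t htD x hx)
  obtain ⟨hss, hsp'⟩ := pointwise_facts hs2 hsp hp31
  obtain ⟨htt, htp'⟩ := pointwise_facts ht2 htp hp31
  obtain ⟨hc1, hc2, hc3, hc4⟩ := conj_rel hp31 ht2 htp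
  -- Show s ∈ D
  have hsD : s ∈ D := by
    rcases perm_cases hp3 hpf htf htp' 0 (s 0) with h | h | h | h | h | h
    · exact absurd h (hsf 0)
    · exfalso
      apply hsf (p (p 0))
      rw [hsp', hsp', h]
      exact hp3 _
    · exfalso
      apply hsf (p 0)
      rw [hsp', h]
      exact hp3 _
    · have : s = t := invol_eq hp3 hpf hss htt htf hsp' htp' h
      rw [this]; exact htD
    · -- s 0 = p (t 0); compare with u := p * t
      have huD : p * t ∈ D := mul_mem hpD htD
      have hune : p * t ≠ 1 := invol_ne_one hc2 hp31 hpne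
      have huf : ∀ x, (p * t) x ≠ x := fun x hx => hune (hDf _ huD x hx)
      obtain ⟨huu, hup'⟩ := pointwise_facts hc1 hc2 hp31
      have : s = p * t := by
        apply invol_eq hp3 hpf hss huu huf hsp' hup'
        rw [h]
        simp [Equiv.Perm.mul_apply]
      rw [this]; exact huD
    · have huD : p * p * t ∈ D := mul_mem (mul_mem hpD hpD) htD
      have hune : p * p * t ≠ 1 := invol_ne_one hc4 hp31 hpne
      have huf : ∀ x, (p * p * t) x ≠ x := fun x hx => hune (hDf _ huD x hx)
      obtain ⟨huu, hup'⟩ := pointwise_facts hc3 hc4 hp31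
      have : s = p * p * t := by
        apply invol_eq hp3 hpf hss huu huf hsp' hup'
        rw [h]
        simp [Equiv.Perm.mul_apply]
      rw [this]; exact huD
  -- closure argument
  have hos : orderOf s = 2 := by
    apply orderOf_eq_prime
    · rw [sq]; exact hs2
    · exact hs1
  have hclo : ∀ F : Subgroup (Equiv.Perm (Fin 6)), p ∈ F → s ∈ F → Nat.card F = 6 →
      Subgroup.closure {p, s} = F := by
    intro F hpF hsF hcF
    have hle : Subgroup.closure {p, s} ≤ F := by
      rw [Subgroup.closure_le]
      intro z hz
      rcases hz with rfl | rfl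
      · exact hpF
      · exact hsF
    have h3 : 3 ∣ Nat.card (Subgroup.closure ({p, s} : Set (Equiv.Perm (Fin 6)))) := by
      have h := Subgroup.orderOf_dvd_natCard (Subgroup.closure ({p, s} : Set (Equiv.Perm (Fin 6))))
        (Subgroup.subset_closure (Set.mem_insert p {s}))
      rwa [hp] at h
    have h2 : 2 ∣ Nat.card (Subgroup.closure ({p, s} : Set (Equiv.Perm (Fin 6)))) := by
      have h := Subgroup.orderOf_dvd_natCard (Subgroup.closure ({p, s} : Set (Equiv.Perm (Fin 6))))
        (Subgroup.subset_closure (Set.mem_insert_of_mem p rfl))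
      rwa [hos] at h
    have h6 : Nat.card (Subgroup.closure ({p, s} : Set (Equiv.Perm (Fin 6)))) ∣ 6 := by
      have h := Subgroup.card_dvd_of_le hle
      rwa [hcF] at h
    have h66 : (6 : ℕ) ∣ Nat.card (Subgroup.closure ({p, s} : Set (Equiv.Perm (Fin 6)))) :=
      Nat.Coprime.mul_dvd_of_dvd_of_dvd (by norm_num) h2 h3
    have hcc : Nat.card (Subgroup.closure ({p, s} : Set (Equiv.Perm (Fin 6)))) = 6 :=
      Nat.dvd_antisymm h6 h66
    exact Subgroup.eq_of_le_of_card_ge hle (by rw [hcF, hcc])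
  rw [← hclo D hpD hsD hcD, hclo E hpE hsE hcE]

/-- Let `M` be a transitive permutation group of degree 6
containing a regular dihedral subgroup of order 6, and suppose a Sylow
3-subgroup of `M` has order 3. Then all regular dihedral subgroups of order 6
of `M` are conjugate in `M`. -/
theorem regular_dihedral_conjugate (M : Subgroup (Equiv.Perm (Fin 6)))
    (htrans : ∀ a b : Fin 6, ∃ g ∈ M, g a = b)
    (hdih : ∃ D : Subgroup (Equiv.Perm (Fin 6)), D ≤ M ∧
      (∀ a b : Fin 6, ∃ g ∈ D, g a = b) ∧
      (∀ g ∈ D, ∀ a : Fin 6, g a = a → g = 1) ∧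
      Nonempty (D ≃* DihedralGroup 3))
    (hsyl : ∀ P : Sylow 3 M, Nat.card P = 3) :
    ∀ D₁ D₂ : Subgroup (Equiv.Perm (Fin 6)), D₁ ≤ M → D₂ ≤ M →
      (∀ a b : Fin 6, ∃ g ∈ D₁, g a = b) →
      (∀ g ∈ D₁, ∀ a : Fin 6, g a = a → g = 1) →
      Nonempty (D₁ ≃* DihedralGroup 3) →
      (∀ a b : Fin 6, ∃ g ∈ D₂, g a = b) →
      (∀ g ∈ D₂, ∀ a : Fin 6, g a = a → g = 1) →
      Nonempty (D₂ ≃* DihedralGroup 3) →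
      ∃ g ∈ M, Subgroup.map (MulAut.conj g).toMonoidHom D₁ = D₂ := by
  intro D₁ D₂ hM1 hM2 htr1 hfree1 hiso1 htr2 hfree2 hiso2
  obtain ⟨e₁⟩ := hiso1
  obtain ⟨e₂⟩ := hiso2
  have hnc : ∀ (F : Subgroup (Equiv.Perm (Fin 6))), (F ≃* DihedralGroup 3) →
      ¬ ∀ x y : F, x * y = y * x := by
    intro F e hc
    have hab : (DihedralGroup.r 1 : DihedralGroup 3) * DihedralGroup.sr 0 ≠
        DihedralGroup.sr 0 * DihedralGroup.r 1 := by decide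
    apply hab
    have h := hc (e.symm (DihedralGroup.r 1)) (e.symm (DihedralGroup.sr 0))
    calc (DihedralGroup.r 1 : DihedralGroup 3) * DihedralGroup.sr 0
        = e (e.symm (DihedralGroup.r 1)) * e (e.symm (DihedralGroup.sr 0)) := by
          rw [e.apply_symm_apply, e.apply_symm_apply]
      _ = e (e.symm (DihedralGroup.r 1) * e.symm (DihedralGroup.sr 0)) := (map_mul e _ _).symm
      _ = e (e.symm (DihedralGroup.sr 0) * e.symm (DihedralGroup.r 1)) := by rw [h]
      _ = DihedralGroup.sr 0 * DihedralGroup.r 1 := by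
          rw [map_mul, e.apply_symm_apply, e.apply_symm_apply]
  have hc1 : Nat.card D₁ = 6 := by rw [Nat.card_congr e₁.toEquiv, DihedralGroup.nat_card]
  have hc2 : Nat.card D₂ = 6 := by rw [Nat.card_congr e₂.toEquiv, DihedralGroup.nat_card]
  haveI : Fact (Nat.Prime 3) := ⟨by norm_num⟩
  obtain ⟨p₁', hp₁o⟩ := exists_prime_orderOf_dvd_card' (G := D₁) 3 (by rw [hc1]; norm_num)
  obtain ⟨p₂', hp₂o⟩ := exists_prime_orderOf_dvd_card' (G := D₂) 3 (by rw [hc2]; norm_num)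
  have hp₁ : orderOf (p₁' : Equiv.Perm (Fin 6)) = 3 := by rw [Subgroup.orderOf_coe, hp₁o]
  have hp₂ : orderOf (p₂' : Equiv.Perm (Fin 6)) = 3 := by rw [Subgroup.orderOf_coe, hp₂o]
  set q₁ : M := ⟨(p₁' : Equiv.Perm (Fin 6)), hM1 p₁'.2⟩ with hq₁def
  set q₂ : M := ⟨(p₂' : Equiv.Perm (Fin 6)), hM2 p₂'.2⟩ with hq₂def
  have hq₁ : orderOf q₁ = 3 := by rw [hq₁def, Subgroup.orderOf_mk]; exact hp₁
  have hq₂ : orderOf q₂ = 3 := by rw [hq₂def, Subgroup.orderOf_mk]; exact hp₂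
  have hpg₁ : IsPGroup 3 (Subgroup.zpowers q₁) :=
    IsPGroup.of_card (by rw [Nat.card_zpowers, hq₁, pow_one])
  have hpg₂ : IsPGroup 3 (Subgroup.zpowers q₂) :=
    IsPGroup.of_card (by rw [Nat.card_zpowers, hq₂, pow_one])
  obtain ⟨Q₁, hQ₁⟩ := hpg₁.exists_le_sylow
  obtain ⟨Q₂, hQ₂⟩ := hpg₂.exists_le_sylow
  have he₁ : Subgroup.zpowers q₁ = ↑Q₁ :=
    Subgroup.eq_of_le_of_card_ge hQ₁ (by rw [hsyl Q₁, Nat.card_zpowers, hq₁])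
  have he₂ : Subgroup.zpowers q₂ = ↑Q₂ :=
    Subgroup.eq_of_le_of_card_ge hQ₂ (by rw [hsyl Q₂, Nat.card_zpowers, hq₂])
  obtain ⟨g, hg⟩ := MulAction.exists_smul_eq (↥M) Q₁ Q₂
  have hgs : MulAut.conj g • (Q₁ : Subgroup ↥M) = ↑Q₂ := by rw [← hg]; rfl
  have hq₁Q : q₁ ∈ (Q₁ : Subgroup ↥M) := he₁ ▸ Subgroup.mem_zpowers q₁
  have humem : g * q₁ * g⁻¹ ∈ Subgroup.zpowers q₂ := by
    rw [he₂, ← hgs]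
    have h := Subgroup.smul_mem_pointwise_smul q₁ (MulAut.conj g) ↑Q₁ hq₁Q
    simpa [MulAut.smul_def] using h
  have hou : orderOf (g * q₁ * g⁻¹) = 3 := by
    have h : g * q₁ * g⁻¹ = (MulAut.conj g).toMonoidHom q₁ := rfl
    rw [h, orderOf_injective _ (MulAut.conj g).injective, hq₁]
  set gp : Equiv.Perm (Fin 6) := (g : Equiv.Perm (Fin 6)) with hgpdef
  have hgpM : gp ∈ M := g.2
  set u : Equiv.Perm (Fin 6) := gp * (p₁' : Equiv.Perm (Fin 6)) * gp⁻¹ with hudef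
  have hucoe : ((g * q₁ * g⁻¹ : M) : Equiv.Perm (Fin 6)) = u := by
    simp [hudef, hgpdef, hq₁def]
  have huD₂ : u ∈ D₂ := by
    rcases zpowers_cases hq₂ humem with h | h | h
    · rw [h] at hou; simp at hou
    · rw [← hucoe, h]
      exact p₂'.2
    · rw [← hucoe, h]
      have : ((q₂ * q₂ : M) : Equiv.Perm (Fin 6)) = (p₂' : Equiv.Perm (Fin 6)) *
          (p₂' : Equiv.Perm (Fin 6)) := by simp [hq₂def]
      rw [this]
      exact mul_mem p₂'.2 p₂'.2
  have huo : orderOf u = 3 := by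
    rw [← hucoe, Subgroup.orderOf_coe, hou]
  set D₀ : Subgroup (Equiv.Perm (Fin 6)) :=
    Subgroup.map (MulAut.conj gp).toMonoidHom D₁ with hD₀def
  have huD₀ : u ∈ D₀ := by
    rw [hD₀def]
    exact ⟨(p₁' : Equiv.Perm (Fin 6)), p₁'.2, rfl⟩
  have hmapinj : Function.Injective (MulAut.conj gp).toMonoidHom := (MulAut.conj gp).injective
  have hequiv := Subgroup.equivMapOfInjective D₁ (MulAut.conj gp).toMonoidHom hmapinj
  have hcD₀ : Nat.card D₀ = 6 := by
    have h := Nat.card_congr hequiv.toEquiv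
    exact h ▸ hc1
  have hfreeD₀ : ∀ z ∈ D₀, ∀ x : Fin 6, z x = x → z = 1 := by
    intro z hz x hzx
    obtain ⟨d, hd, rfl⟩ := hz
    have hcd : (MulAut.conj gp).toMonoidHom d = gp * d * gp⁻¹ := rfl
    rw [hcd] at hzx ⊢
    have h1 : gp (d (gp⁻¹ x)) = x := by
      simpa [Equiv.Perm.mul_apply] using hzx
    have h2 : d (gp⁻¹ x) = gp⁻¹ x := by
      apply gp.injective
      rw [h1]
      exact (Equiv.apply_symm_apply gp x).symm
    have h3 : d = 1 := hfree1 d hd _ h2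
    rw [h3]
    group
  have hncD₀ : ¬ ∀ x y : D₀, x * y = y * x := hnc D₀ (hequiv.symm.trans e₁)
  have hncD₂ : ¬ ∀ x y : D₂, x * y = y * x := hnc D₂ e₂
  refine ⟨gp, hgpM, ?_⟩
  rw [← hD₀def]
  exact subgroup_eq huD₀ huD₂ huo hcD₀ hc2 hfreeD₀ hfree2 hncD₀ hncD₂
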